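/- arXiv:2511.00066 — 2 statements merged into one kernel-verified Lean document; each statement's English description precedes it below -/
import Mathlib

section
/- Let L ≥ 1, let N, n, and m_1,…,m_L be positive integers, let p be a probability vector on a set of size N, let k ∈ {1,…,N} be an index with π := p_k, and let e_k be the corresponding one-hot vector. Let W be an N × n real matrix whose singular values all lie in [a^W, b^W] with 0 ≤ a^W; for each j ∈ {1,…,L} let J_j be an n × n real matrix whose singular values all lie in [a_j^J, b_j^J] with 0 ≤ a_j^J; and for each l ∈ {1,…,L} let G_l be an n × m_l real matrix whose singular values all lie in [a_l^G, b_l^G] with 0 ≤ a_l^G. For each l define the row vector g_l := (e_k − p) · W · (J_L J_{L−1} ⋯ J_l) · G_l, and set ‖g‖₂ := √(∑_{l=1}^L ‖g_l‖₂²). Then ((1 − π)/√L) · ∑_{l=1}^L (a^W a_l^G ∏_{j=l}^L a_j^J) ≤ ‖g‖₂ ≤ √2 · (1 − π) · ∑_{l=1}^L (b^W b_l^G ∏_{j=l}^L b_j^J). -/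
open Matrix Finset

/-- Euclidean norm of a (row) vector: `√(∑ j, x j ^ 2)`. -/
noncomputable def euclNorm {ι : Type*} [Fintype ι] (x : ι → ℝ) : ℝ :=
  Real.sqrt (∑ j, x j ^ 2)

/-- The singular values of a real matrix `M`, i.e. the square roots of the
eigenvalues of the positive semidefinite matrix `M * Mᵀ`. -/
noncomputable def singularValues {N M : ℕ} (A : Matrix (Fin N) (Fin M) ℝ) : Fin N → ℝ :=
  fun i => Real.sqrt ((Matrix.isHermitian_mul_conjTranspose_self A).eigenvalues i)

/-- `descProd J l c = J (l+c-1) * J (l+c-2) * ⋯ * J l`, the descending product of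
`c` consecutive square matrices starting from index `l`. -/
noncomputable def descProd {n : ℕ} (J : ℕ → Matrix (Fin n) (Fin n) ℝ) :
    ℕ → ℕ → Matrix (Fin n) (Fin n) ℝ
  | _, 0 => 1
  | l, c + 1 => J (l + c) * descProd J l c

lemma euclNorm_nonneg {ι : Type*} [Fintype ι] (x : ι → ℝ) : 0 ≤ euclNorm x :=
  Real.sqrt_nonneg _

lemma quad_bounds {ι : Type*} [Fintype ι] [DecidableEq ι] {H : Matrix ι ι ℝ} (hH : H.IsHermitian)
    {c C : ℝ} (hc : ∀ i, c ≤ hH.eigenvalues i) (hC : ∀ i, hH.eigenvalues i ≤ C) (x : ι → ℝ) :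
    c * (x ⬝ᵥ x) ≤ x ⬝ᵥ (H *ᵥ x) ∧ x ⬝ᵥ (H *ᵥ x) ≤ C * (x ⬝ᵥ x) := by
  set U : Matrix ι ι ℝ := (hH.eigenvectorUnitary : Matrix ι ι ℝ) with hU
  have hstar : (star U : Matrix ι ι ℝ) = Uᵀ := by
    ext i j; simp [conjTranspose_apply]
  set y : ι → ℝ := Uᵀ *ᵥ x with hy
  have h1 : U * Uᵀ = 1 := by
    rw [← hstar]; exact (Matrix.mem_unitaryGroup_iff).mp hH.eigenvectorUnitary.2
  have hyy : y ⬝ᵥ y = x ⬝ᵥ x := by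
    rw [hy, mulVec_transpose, ← dotProduct_mulVec x U, ← mulVec_transpose, mulVec_mulVec, h1,
      one_mulVec]
  have hspec : x ⬝ᵥ (H *ᵥ x) = ∑ i, hH.eigenvalues i * (y i * y i) := by
    conv_lhs => rw [hH.spectral_theorem, Unitary.conjStarAlgAut_apply, ← hU]
    rw [hstar, ← mulVec_mulVec, ← mulVec_mulVec, dotProduct_mulVec, ← mulVec_transpose, ← hy]
    simp [dotProduct, mulVec_diagonal, mul_comm, mul_assoc, mul_left_comm]
  constructor
  · calc c * (x ⬝ᵥ x) = ∑ i, c * (y i * y i) := by rw [← hyy]; simp [dotProduct, Finset.mul_sum]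
      _ ≤ ∑ i, hH.eigenvalues i * (y i * y i) :=
        Finset.sum_le_sum fun i _ => mul_le_mul_of_nonneg_right (hc i) (mul_self_nonneg _)
      _ = x ⬝ᵥ (H *ᵥ x) := hspec.symm
  · calc x ⬝ᵥ (H *ᵥ x) = ∑ i, hH.eigenvalues i * (y i * y i) := hspec
      _ ≤ ∑ i, C * (y i * y i) :=
        Finset.sum_le_sum fun i _ => mul_le_mul_of_nonneg_right (hC i) (mul_self_nonneg _)
      _ = C * (x ⬝ᵥ x) := by rw [← hyy]; simp [dotProduct, Finset.mul_sum]

lemma vecMul_bounds {N M : ℕ} (A : Matrix (Fin N) (Fin M) ℝ) {a b : ℝ} (ha : 0 ≤ a) (hb : 0 ≤ b)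
    (hA : ∀ i, a ≤ singularValues A i ∧ singularValues A i ≤ b) (x : Fin N → ℝ) :
    a * euclNorm x ≤ euclNorm (x ᵥ* A) ∧ euclNorm (x ᵥ* A) ≤ b * euclNorm x := by
  have hH := Matrix.isHermitian_mul_conjTranspose_self A
  have hpsd : (A * Aᴴ).PosSemidef := Matrix.posSemidef_self_mul_conjTranspose A
  have hev : ∀ i, hH.eigenvalues i = (singularValues A i) ^ 2 := by
    intro i
    rw [singularValues, Real.sq_sqrt (hpsd.eigenvalues_nonneg i)]
  have hc : ∀ i, a ^ 2 ≤ hH.eigenvalues i := fun i => by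
    rw [hev i]; exact pow_le_pow_left₀ ha (hA i).1 2
  have hC : ∀ i, hH.eigenvalues i ≤ b ^ 2 := fun i => by
    rw [hev i]
    exact pow_le_pow_left₀ (le_trans ha (hA i).1) (hA i).2 2
  obtain ⟨hlo, hhi⟩ := quad_bounds hH hc hC x
  have hds : ∀ {κ : Type} [Fintype κ] (z : κ → ℝ), z ⬝ᵥ z = ∑ j, z j ^ 2 := by
    intro κ _ z; simp [dotProduct, pow_two]
  have hkey : (x ᵥ* A) ⬝ᵥ (x ᵥ* A) = x ⬝ᵥ ((A * Aᴴ) *ᵥ x) := by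
    have hAH : Aᴴ = Aᵀ := by ext i j; simp [conjTranspose_apply]
    rw [hAH, ← dotProduct_mulVec x A, ← mulVec_transpose, mulVec_mulVec]
  have hEN : euclNorm (x ᵥ* A) = Real.sqrt (x ⬝ᵥ ((A * Aᴴ) *ᵥ x)) := by
    rw [euclNorm, ← hds, hkey]
  have hENx : euclNorm x = Real.sqrt (x ⬝ᵥ x) := by rw [euclNorm, ← hds]
  constructor
  · rw [hEN, hENx]
    calc a * Real.sqrt (x ⬝ᵥ x) = Real.sqrt (a ^ 2 * (x ⬝ᵥ x)) := by
          rw [Real.sqrt_mul (sq_nonneg a), Real.sqrt_sq ha]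
      _ ≤ Real.sqrt (x ⬝ᵥ ((A * Aᴴ) *ᵥ x)) := Real.sqrt_le_sqrt hlo
  · rw [hEN, hENx]
    calc Real.sqrt (x ⬝ᵥ ((A * Aᴴ) *ᵥ x)) ≤ Real.sqrt (b ^ 2 * (x ⬝ᵥ x)) :=
          Real.sqrt_le_sqrt hhi
      _ = b * Real.sqrt (x ⬝ᵥ x) := by rw [Real.sqrt_mul (sq_nonneg b), Real.sqrt_sq hb]

lemma descProd_bounds {n L : ℕ} (J : ℕ → Matrix (Fin n) (Fin n) ℝ) (aJ bJ : ℕ → ℝ)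
    (haJ : ∀ j < L, 0 ≤ aJ j) (hbJ : ∀ j < L, 0 ≤ bJ j)
    (hJ : ∀ j < L, ∀ i, aJ j ≤ singularValues (J j) i ∧ singularValues (J j) i ≤ bJ j) :
    ∀ c l, l + c ≤ L → ∀ y : Fin n → ℝ,
      (∏ j ∈ Finset.Ico l (l + c), aJ j) * euclNorm y ≤ euclNorm (y ᵥ* descProd J l c) ∧
      euclNorm (y ᵥ* descProd J l c) ≤ (∏ j ∈ Finset.Ico l (l + c), bJ j) * euclNorm y := by
  intro c
  induction c with
  | zero => intro l _ y; simp [descProd, vecMul_one]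
  | succ c ih =>
    intro l h y
    have h1 : l + c < L := by omega
    have hstep := vecMul_bounds (J (l + c)) (haJ _ h1) (hbJ _ h1) (hJ _ h1) y
    have hrec := ih l (by omega) (y ᵥ* J (l + c))
    have hrw : y ᵥ* descProd J l (c + 1) = (y ᵥ* J (l + c)) ᵥ* descProd J l c := by
      show y ᵥ* (J (l + c) * descProd J l c) = _
      rw [← vecMul_vecMul]
    have hPA : 0 ≤ ∏ j ∈ Finset.Ico l (l + c), aJ j :=
      Finset.prod_nonneg fun j hj => haJ j (lt_of_lt_of_le (Finset.mem_Ico.mp hj).2 (by omega))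
    have hPB : 0 ≤ ∏ j ∈ Finset.Ico l (l + c), bJ j :=
      Finset.prod_nonneg fun j hj => hbJ j (lt_of_lt_of_le (Finset.mem_Ico.mp hj).2 (by omega))
    have hprodA : ∏ j ∈ Finset.Ico l (l + (c + 1)), aJ j
        = aJ (l + c) * ∏ j ∈ Finset.Ico l (l + c), aJ j := by
      rw [show l + (c + 1) = (l + c) + 1 by ring, Finset.prod_Ico_succ_top (by omega), mul_comm]
    have hprodB : ∏ j ∈ Finset.Ico l (l + (c + 1)), bJ j
        = bJ (l + c) * ∏ j ∈ Finset.Ico l (l + c), bJ j := by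
      rw [show l + (c + 1) = (l + c) + 1 by ring, Finset.prod_Ico_succ_top (by omega), mul_comm]
    constructor
    · rw [hrw, hprodA]
      calc aJ (l + c) * (∏ j ∈ Finset.Ico l (l + c), aJ j) * euclNorm y
          = (∏ j ∈ Finset.Ico l (l + c), aJ j) * (aJ (l + c) * euclNorm y) := by ring
        _ ≤ (∏ j ∈ Finset.Ico l (l + c), aJ j) * euclNorm (y ᵥ* J (l + c)) :=
            mul_le_mul_of_nonneg_left hstep.1 hPA
        _ ≤ euclNorm ((y ᵥ* J (l + c)) ᵥ* descProd J l c) := hrec.1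
    · rw [hrw, hprodB]
      calc euclNorm ((y ᵥ* J (l + c)) ᵥ* descProd J l c)
          ≤ (∏ j ∈ Finset.Ico l (l + c), bJ j) * euclNorm (y ᵥ* J (l + c)) := hrec.2
        _ ≤ (∏ j ∈ Finset.Ico l (l + c), bJ j) * (bJ (l + c) * euclNorm y) :=
            mul_le_mul_of_nonneg_left hstep.2 hPB
        _ = bJ (l + c) * (∏ j ∈ Finset.Ico l (l + c), bJ j) * euclNorm y := by ring

/-- Token gradient bound: with layers indexed `l = 0, …, L-1`, blocks
`g_l = (e_k − p) · W · (J_{L-1} ⋯ J_l) · G_l` and `‖g‖₂ = √(∑ l ‖g_l‖₂²)`,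
`((1-π)/√L) ∑_l a^W a^G_l ∏_{j=l}^{L-1} a^J_j ≤ ‖g‖₂ ≤
 √2 (1-π) ∑_l b^W b^G_l ∏_{j=l}^{L-1} b^J_j`. -/
theorem token_gradient_bound (L : ℕ) (hL : 1 ≤ L) (N n : ℕ) (hN : 0 < N) (hn : 0 < n)
    (m : ℕ → ℕ) (hm : ∀ l < L, 0 < m l)
    (p : Fin N → ℝ) (hp : ∀ j, 0 ≤ p j) (hsum : ∑ j, p j = 1) (k : Fin N)
    (W : Matrix (Fin N) (Fin n) ℝ) (aW bW : ℝ) (haW : 0 ≤ aW)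
    (hW : ∀ i, aW ≤ singularValues W i ∧ singularValues W i ≤ bW)
    (J : ℕ → Matrix (Fin n) (Fin n) ℝ) (aJ bJ : ℕ → ℝ) (haJ : ∀ j < L, 0 ≤ aJ j)
    (hJ : ∀ j < L, ∀ i, aJ j ≤ singularValues (J j) i ∧ singularValues (J j) i ≤ bJ j)
    (G : ∀ l, Matrix (Fin n) (Fin (m l)) ℝ) (aG bG : ℕ → ℝ) (haG : ∀ l < L, 0 ≤ aG l)
    (hG : ∀ l < L, ∀ i, aG l ≤ singularValues (G l) i ∧ singularValues (G l) i ≤ bG l) :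
    ((1 - p k) / Real.sqrt L) *
        ∑ l ∈ Finset.range L, (aW * aG l * ∏ j ∈ Finset.Ico l L, aJ j)
      ≤ Real.sqrt (∑ l ∈ Finset.range L,
          euclNorm ((((Pi.single k 1 : Fin N → ℝ) - p) ᵥ* W ᵥ* descProd J l (L - l)) ᵥ* G l) ^ 2) ∧
    Real.sqrt (∑ l ∈ Finset.range L,
          euclNorm ((((Pi.single k 1 : Fin N → ℝ) - p) ᵥ* W ᵥ* descProd J l (L - l)) ᵥ* G l) ^ 2)
      ≤ Real.sqrt 2 * (1 - p k) *
          ∑ l ∈ Finset.range L, (bW * bG l * ∏ j ∈ Finset.Ico l L, bJ j) := by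
  -- nonnegativity of upper singular-value bounds
  have hbW : 0 ≤ bW := le_trans haW (le_trans (hW ⟨0, hN⟩).1 (hW ⟨0, hN⟩).2)
  have hbJ : ∀ j < L, 0 ≤ bJ j := fun j hj =>
    le_trans (haJ j hj) (le_trans (hJ j hj ⟨0, hn⟩).1 (hJ j hj ⟨0, hn⟩).2)
  have hbG : ∀ l < L, 0 ≤ bG l := fun l hl =>
    le_trans (haG l hl) (le_trans (hG l hl ⟨0, hn⟩).1 (hG l hl ⟨0, hn⟩).2)
  set x0 : Fin N → ℝ := (Pi.single k 1 : Fin N → ℝ) - p with hx0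
  have hpk1 : p k ≤ 1 := hsum ▸ Finset.single_le_sum (fun j _ => hp j) (Finset.mem_univ k)
  have hpk0 : 0 ≤ 1 - p k := by linarith
  have hx0k : x0 k = 1 - p k := by simp [hx0]
  -- lower bound on ‖x0‖
  have h0lo : 1 - p k ≤ euclNorm x0 := by
    have h1 : (1 - p k) ^ 2 ≤ ∑ j, x0 j ^ 2 := by
      rw [← hx0k]
      exact Finset.single_le_sum (f := fun j => x0 j ^ 2) (fun j _ => sq_nonneg _)
        (Finset.mem_univ k)
    calc 1 - p k = Real.sqrt ((1 - p k) ^ 2) := (Real.sqrt_sq hpk0).symm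
      _ ≤ euclNorm x0 := Real.sqrt_le_sqrt h1
  -- upper bound on ‖x0‖
  have h0hi : euclNorm x0 ≤ Real.sqrt 2 * (1 - p k) := by
    have hsplit : ∑ j, x0 j ^ 2 = (1 - p k) ^ 2 + ∑ j ∈ Finset.univ.erase k, x0 j ^ 2 := by
      rw [← hx0k]
      exact (Finset.add_sum_erase _ (fun j => x0 j ^ 2) (Finset.mem_univ k)).symm
    have herase : ∑ j ∈ Finset.univ.erase k, x0 j ^ 2 = ∑ j ∈ Finset.univ.erase k, p j ^ 2 := by
      apply Finset.sum_congr rfl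
      intro j hj
      have hjk : j ≠ k := (Finset.mem_erase.mp hj).1
      simp [hx0, Pi.single_eq_of_ne hjk]
    have hps : ∑ j ∈ Finset.univ.erase k, p j = 1 - p k := by
      rw [Finset.sum_erase_eq_sub (Finset.mem_univ k), hsum]
    have hsq : ∑ j ∈ Finset.univ.erase k, p j ^ 2 ≤ (1 - p k) ^ 2 := by
      rw [← hps]
      exact Finset.sum_sq_le_sq_sum_of_nonneg fun j _ => hp j
    have hle : ∑ j, x0 j ^ 2 ≤ 2 * (1 - p k) ^ 2 := by
      rw [hsplit, herase]; linarith
    calc euclNorm x0 ≤ Real.sqrt (2 * (1 - p k) ^ 2) := Real.sqrt_le_sqrt hle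
      _ = Real.sqrt 2 * (1 - p k) := by
          rw [Real.sqrt_mul (by norm_num : (0:ℝ) ≤ 2), Real.sqrt_sq hpk0]
  -- per-layer bounds
  have hper : ∀ l ∈ Finset.range L,
      (aW * aG l * ∏ j ∈ Finset.Ico l L, aJ j) * (1 - p k)
        ≤ euclNorm ((x0 ᵥ* W ᵥ* descProd J l (L - l)) ᵥ* G l) ∧
      euclNorm ((x0 ᵥ* W ᵥ* descProd J l (L - l)) ᵥ* G l)
        ≤ (bW * bG l * ∏ j ∈ Finset.Ico l L, bJ j) * (Real.sqrt 2 * (1 - p k)) := by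
    intro l hl
    rw [Finset.mem_range] at hl
    have hWb := vecMul_bounds W haW hbW hW x0
    have hIco : l + (L - l) = L := by omega
    have hDb := descProd_bounds J aJ bJ haJ hbJ hJ (L - l) l (by omega) (x0 ᵥ* W)
    rw [hIco] at hDb
    have hGb := vecMul_bounds (G l) (haG l hl) (hbG l hl) (hG l hl) (x0 ᵥ* W ᵥ* descProd J l (L - l))
    have hPA : 0 ≤ ∏ j ∈ Finset.Ico l L, aJ j :=
      Finset.prod_nonneg fun j hj => haJ j (Finset.mem_Ico.mp hj).2
    have hPB : 0 ≤ ∏ j ∈ Finset.Ico l L, bJ j :=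
      Finset.prod_nonneg fun j hj => hbJ j (Finset.mem_Ico.mp hj).2
    have A1 : aW * (1 - p k) ≤ euclNorm (x0 ᵥ* W) :=
      le_trans (mul_le_mul_of_nonneg_left h0lo haW) hWb.1
    have A2 : (∏ j ∈ Finset.Ico l L, aJ j) * (aW * (1 - p k))
        ≤ euclNorm (x0 ᵥ* W ᵥ* descProd J l (L - l)) :=
      le_trans (mul_le_mul_of_nonneg_left A1 hPA) hDb.1
    have A3 : aG l * ((∏ j ∈ Finset.Ico l L, aJ j) * (aW * (1 - p k)))
        ≤ euclNorm ((x0 ᵥ* W ᵥ* descProd J l (L - l)) ᵥ* G l) :=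
      le_trans (mul_le_mul_of_nonneg_left A2 (haG l hl)) hGb.1
    have B1 : euclNorm (x0 ᵥ* W) ≤ bW * (Real.sqrt 2 * (1 - p k)) :=
      le_trans hWb.2 (mul_le_mul_of_nonneg_left h0hi hbW)
    have B2 : euclNorm (x0 ᵥ* W ᵥ* descProd J l (L - l))
        ≤ (∏ j ∈ Finset.Ico l L, bJ j) * (bW * (Real.sqrt 2 * (1 - p k))) :=
      le_trans hDb.2 (mul_le_mul_of_nonneg_left B1 hPB)
    have B3 : euclNorm ((x0 ᵥ* W ᵥ* descProd J l (L - l)) ᵥ* G l)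
        ≤ bG l * ((∏ j ∈ Finset.Ico l L, bJ j) * (bW * (Real.sqrt 2 * (1 - p k)))) :=
      le_trans hGb.2 (mul_le_mul_of_nonneg_left B2 (hbG l hl))
    constructor
    · calc (aW * aG l * ∏ j ∈ Finset.Ico l L, aJ j) * (1 - p k)
          = aG l * ((∏ j ∈ Finset.Ico l L, aJ j) * (aW * (1 - p k))) := by ring
        _ ≤ _ := A3
    · calc euclNorm ((x0 ᵥ* W ᵥ* descProd J l (L - l)) ᵥ* G l)
          ≤ bG l * ((∏ j ∈ Finset.Ico l L, bJ j) * (bW * (Real.sqrt 2 * (1 - p k)))) := B3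
        _ = (bW * bG l * ∏ j ∈ Finset.Ico l L, bJ j) * (Real.sqrt 2 * (1 - p k)) := by ring
  set g : ℕ → ℝ := fun l => euclNorm ((x0 ᵥ* W ᵥ* descProd J l (L - l)) ᵥ* G l) with hg
  have hgnn : ∀ l ∈ Finset.range L, 0 ≤ g l := fun l _ => euclNorm_nonneg _
  have hgsumnn : 0 ≤ ∑ l ∈ Finset.range L, g l := Finset.sum_nonneg hgnn
  have hS : 0 ≤ ∑ l ∈ Finset.range L, g l ^ 2 :=
    Finset.sum_nonneg fun l _ => sq_nonneg _
  constructor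
  · -- lower bound
    have hCS : (∑ l ∈ Finset.range L, g l) ^ 2 ≤ L * ∑ l ∈ Finset.range L, g l ^ 2 := by
      have := sq_sum_le_card_mul_sum_sq (s := Finset.range L) (f := g)
      simpa using this
    have hs1 : ∑ l ∈ Finset.range L, g l
        ≤ Real.sqrt L * Real.sqrt (∑ l ∈ Finset.range L, g l ^ 2) := by
      have h := Real.sqrt_le_sqrt hCS
      rwa [Real.sqrt_sq hgsumnn, Real.sqrt_mul (by positivity : (0:ℝ) ≤ (L:ℝ))] at h
    have hs2 : (∑ l ∈ Finset.range L, (aW * aG l * ∏ j ∈ Finset.Ico l L, aJ j)) * (1 - p k)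
        ≤ ∑ l ∈ Finset.range L, g l := by
      rw [Finset.sum_mul]
      exact Finset.sum_le_sum fun l hl => (hper l hl).1
    have hsqL : (0:ℝ) < Real.sqrt L := Real.sqrt_pos.mpr (by positivity)
    rw [div_mul_eq_mul_div, div_le_iff₀ hsqL]
    calc (1 - p k) * ∑ l ∈ Finset.range L, (aW * aG l * ∏ j ∈ Finset.Ico l L, aJ j)
        = (∑ l ∈ Finset.range L, (aW * aG l * ∏ j ∈ Finset.Ico l L, aJ j)) * (1 - p k) := by ring
      _ ≤ ∑ l ∈ Finset.range L, g l := hs2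
      _ ≤ Real.sqrt L * Real.sqrt (∑ l ∈ Finset.range L, g l ^ 2) := hs1
      _ = Real.sqrt (∑ l ∈ Finset.range L, g l ^ 2) * Real.sqrt L := by ring
  · -- upper bound
    have h1 : Real.sqrt (∑ l ∈ Finset.range L, g l ^ 2) ≤ ∑ l ∈ Finset.range L, g l := by
      have h2 : ∑ l ∈ Finset.range L, g l ^ 2 ≤ (∑ l ∈ Finset.range L, g l) ^ 2 :=
        Finset.sum_sq_le_sq_sum_of_nonneg hgnn
      calc Real.sqrt (∑ l ∈ Finset.range L, g l ^ 2)
          ≤ Real.sqrt ((∑ l ∈ Finset.range L, g l) ^ 2) := Real.sqrt_le_sqrt h2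
        _ = ∑ l ∈ Finset.range L, g l := Real.sqrt_sq hgsumnn
    calc Real.sqrt (∑ l ∈ Finset.range L, g l ^ 2) ≤ ∑ l ∈ Finset.range L, g l := h1
      _ ≤ ∑ l ∈ Finset.range L,
            (bW * bG l * ∏ j ∈ Finset.Ico l L, bJ j) * (Real.sqrt 2 * (1 - p k)) :=
          Finset.sum_le_sum fun l hl => (hper l hl).2
      _ = Real.sqrt 2 * (1 - p k) *
            ∑ l ∈ Finset.range L, (bW * bG l * ∏ j ∈ Finset.Ico l L, bJ j) := by
          rw [Finset.mul_sum]; exact Finset.sum_congr rfl fun l _ => by ring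
end

section
/- Let L ≥ 1, let N, n, and m_1,…,m_L be positive integers, let p be a probability vector on a set of size N, let k ∈ {1,…,N} be an index with π := p_k, let e_k be the corresponding one-hot vector, and let w > 0 and γ ∈ ℝ be scalars. Let W be an N × n real matrix whose singular values all lie in [a^W, b^W] with 0 ≤ a^W; for each j ∈ {1,…,L} let J_j be an n × n real matrix whose singular values all lie in [a_j^J, b_j^J] with 0 ≤ a_j^J; and for each l ∈ {1,…,L} let G_l be an n × m_l real matrix whose singular values all lie in [a_l^G, b_l^G] with 0 ≤ a_l^G. For each l define the row vector g_l := γ · w · (e_k − p) · W · (J_L J_{L−1} ⋯ J_l) · G_l, and set ‖g‖₂ := √(∑_{l=1}^L ‖g_l‖₂²). Then (w(1 − π)|γ|/√L) · ∑_{l=1}^L (a^W a_l^G ∏_{j=l}^L a_j^J) ≤ ‖g‖₂ ≤ √2 · w(1 − π)|γ| · ∑_{l=1}^L (b^W b_l^G ∏_{j=l}^L b_j^J). -/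
open Matrix Finset

lemma quad_form_bounds {N : ℕ} {A : Matrix (Fin N) (Fin N) ℝ} (hA : A.IsHermitian)
    {c C : ℝ} (h : ∀ i, c ≤ hA.eigenvalues i ∧ hA.eigenvalues i ≤ C) (x : Fin N → ℝ) :
    c * (∑ j, x j ^ 2) ≤ x ⬝ᵥ A *ᵥ x ∧ x ⬝ᵥ A *ᵥ x ≤ C * (∑ j, x j ^ 2) := by
  set U : Matrix (Fin N) (Fin N) ℝ := (hA.eigenvectorUnitary : Matrix (Fin N) (Fin N) ℝ) with hU
  set y : Fin N → ℝ := star U *ᵥ x with hy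
  have hUU : U * star U = 1 := (Matrix.mem_unitaryGroup_iff).mp hA.eigenvectorUnitary.2
  have key : x ⬝ᵥ A *ᵥ x = ∑ i, hA.eigenvalues i * y i ^ 2 := by
    conv_lhs => rw [hA.spectral_theorem, Unitary.conjStarAlgAut_apply]
    rw [← mulVec_mulVec, ← mulVec_mulVec, dotProduct_mulVec]
    have hxU : x ᵥ* U = star U *ᵥ x := by
      rw [Matrix.star_eq_conjTranspose, conjTranspose_eq_transpose_of_trivial, ← vecMul_transpose,
        transpose_transpose]
    rw [hxU]
    simp [dotProduct, mulVec_diagonal, hy, mul_comm, pow_two, mul_assoc, mul_left_comm]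
    rfl
  have norm_eq : (∑ j, x j ^ 2) = ∑ i, y i ^ 2 := by
    have h1 : ∀ z : Fin N → ℝ, ∑ i, z i ^ 2 = z ⬝ᵥ z := by
      intro z; simp [dotProduct, pow_two]
    rw [h1, h1, hy, dotProduct_mulVec]
    have : (star U *ᵥ x) ᵥ* star U = (U * star U) *ᵥ x := by
      rw [← mulVec_transpose]
      rw [Matrix.star_eq_conjTranspose, conjTranspose_eq_transpose_of_trivial, transpose_transpose,
        mulVec_mulVec]
    rw [this, hUU, one_mulVec, dotProduct_comm]
  constructor
  · rw [key, norm_eq, Finset.mul_sum]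
    exact Finset.sum_le_sum fun i _ => mul_le_mul_of_nonneg_right (h i).1 (sq_nonneg _)
  · rw [key, norm_eq, Finset.mul_sum]
    exact Finset.sum_le_sum fun i _ => mul_le_mul_of_nonneg_right (h i).2 (sq_nonneg _)

lemma euclNorm_smul {ι : Type*} [Fintype ι] (r : ℝ) (x : ι → ℝ) :
    euclNorm (r • x) = |r| * euclNorm x := by
  unfold euclNorm
  rw [← Real.sqrt_sq_eq_abs, ← Real.sqrt_mul (sq_nonneg r), Finset.mul_sum]
  congr 1
  exact Finset.sum_congr rfl fun j _ => by simp [mul_pow]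

lemma vecMul_norm_bounds {N M : ℕ} (A : Matrix (Fin N) (Fin M) ℝ) {a b : ℝ} (ha : 0 ≤ a)
    (hb : 0 ≤ b)
    (h : ∀ i, a ≤ singularValues A i ∧ singularValues A i ≤ b) (x : Fin N → ℝ) :
    a * euclNorm x ≤ euclNorm (x ᵥ* A) ∧ euclNorm (x ᵥ* A) ≤ b * euclNorm x := by
  have hA := Matrix.isHermitian_mul_conjTranspose_self A
  have heig : ∀ i, a ^ 2 ≤ hA.eigenvalues i ∧ hA.eigenvalues i ≤ b ^ 2 := by
    intro i
    have hnn : 0 ≤ hA.eigenvalues i :=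
      (Matrix.posSemidef_self_mul_conjTranspose A).eigenvalues_nonneg i
    have hs : Real.sqrt (hA.eigenvalues i) = singularValues A i := rfl
    constructor
    · calc a ^ 2 ≤ (singularValues A i) ^ 2 := by nlinarith [(h i).1]
        _ = hA.eigenvalues i := by rw [← hs, Real.sq_sqrt hnn]
    · calc hA.eigenvalues i = (singularValues A i) ^ 2 := by rw [← hs, Real.sq_sqrt hnn]
        _ ≤ b ^ 2 := by nlinarith [(h i).2, Real.sqrt_nonneg (hA.eigenvalues i), hs]
  have hquad := quad_form_bounds hA heig x
  have hkey : ∑ j, (x ᵥ* A) j ^ 2 = x ⬝ᵥ (A * Aᴴ) *ᵥ x := by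
    have h1 : ∀ {ι : Type} [Fintype ι] (z : ι → ℝ), ∑ i, z i ^ 2 = z ⬝ᵥ z := by
      intro ι _ z; simp [dotProduct, pow_two]
    rw [h1, ← mulVec_mulVec, dotProduct_mulVec]
    congr 1
    rw [Matrix.conjTranspose_eq_transpose_of_trivial, ← vecMul_transpose, transpose_transpose]
  constructor
  · rw [euclNorm, euclNorm, ← Real.sqrt_sq ha, ← Real.sqrt_mul (sq_nonneg a)]
    apply Real.sqrt_le_sqrt
    rw [hkey]; exact hquad.1
  · rw [euclNorm, euclNorm, ← Real.sqrt_sq hb, ← Real.sqrt_mul (sq_nonneg b)]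
    apply Real.sqrt_le_sqrt
    rw [hkey]; exact hquad.2

lemma onehot_sub_bounds {N : ℕ} (p : Fin N → ℝ) (hp : ∀ j, 0 ≤ p j) (hsum : ∑ j, p j = 1)
    (k : Fin N) :
    (1 - p k) ≤ euclNorm ((Pi.single k 1 : Fin N → ℝ) - p) ∧
    euclNorm ((Pi.single k 1 : Fin N → ℝ) - p) ≤ Real.sqrt 2 * (1 - p k) := by
  set t := 1 - p k with ht
  have htsum : ∑ j ∈ univ \ {k}, p j = t := by
    have := Finset.sum_eq_add_sum_sdiff_singleton_of_mem (Finset.mem_univ k) p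
    rw [hsum] at this; linarith [this]
  have htnn : 0 ≤ t := by
    rw [← htsum]; exact Finset.sum_nonneg fun j _ => hp j
  have hsplit : ∑ j, ((Pi.single k 1 : Fin N → ℝ) - p) j ^ 2
      = t ^ 2 + ∑ j ∈ univ \ {k}, p j ^ 2 := by
    rw [Finset.sum_eq_add_sum_sdiff_singleton_of_mem (Finset.mem_univ k)]
    congr 1
    · simp [ht]
    · apply Finset.sum_congr rfl
      intro j hj
      have : j ≠ k := by simpa using (Finset.mem_sdiff.mp hj).2
      simp [Pi.single_eq_of_ne this]
  constructor
  · rw [euclNorm, hsplit]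
    calc t = Real.sqrt (t ^ 2) := (Real.sqrt_sq htnn).symm
      _ ≤ _ := Real.sqrt_le_sqrt (le_add_of_nonneg_right (Finset.sum_nonneg fun j _ => sq_nonneg _))
  · rw [euclNorm, hsplit]
    have h2 : ∑ j ∈ univ \ {k}, p j ^ 2 ≤ t ^ 2 := by
      rw [← htsum]
      exact Finset.sum_sq_le_sq_sum_of_nonneg fun j _ => hp j
    calc Real.sqrt (t ^ 2 + ∑ j ∈ univ \ {k}, p j ^ 2) ≤ Real.sqrt (2 * t ^ 2) := by
          apply Real.sqrt_le_sqrt; linarith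
      _ = Real.sqrt 2 * t := by
          rw [Real.sqrt_mul (by norm_num), Real.sqrt_sq htnn]

lemma descProd_norm_bounds {n : ℕ} (J : ℕ → Matrix (Fin n) (Fin n) ℝ) (aJ bJ : ℕ → ℝ)
    (l c : ℕ)
    (haJ : ∀ j, l ≤ j → j < l + c → 0 ≤ aJ j) (hbJ : ∀ j, l ≤ j → j < l + c → 0 ≤ bJ j)
    (hJ : ∀ j, l ≤ j → j < l + c → ∀ i,
      aJ j ≤ singularValues (J j) i ∧ singularValues (J j) i ≤ bJ j) (x : Fin n → ℝ) :
    (∏ j ∈ Finset.Ico l (l + c), aJ j) * euclNorm x ≤ euclNorm (x ᵥ* descProd J l c) ∧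
    euclNorm (x ᵥ* descProd J l c) ≤ (∏ j ∈ Finset.Ico l (l + c), bJ j) * euclNorm x := by
  induction c generalizing x with
  | zero => simp [descProd, vecMul_one]
  | succ c ih =>
    have hle : l ≤ l + c := Nat.le_add_right l c
    have hstep := vecMul_norm_bounds (J (l + c)) (haJ _ hle (by omega)) (hbJ _ hle (by omega))
      (hJ _ hle (by omega)) x
    have ihy := ih (fun j h1 h2 => haJ j h1 (by omega)) (fun j h1 h2 => hbJ j h1 (by omega))
      (fun j h1 h2 => hJ j h1 (by omega)) (x ᵥ* J (l + c))
    have hprodA : 0 ≤ ∏ j ∈ Finset.Ico l (l + c), aJ j :=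
      Finset.prod_nonneg fun j hj => by
        have h := Finset.mem_Ico.mp hj; exact haJ j h.1 (by omega)
    have hprodB : 0 ≤ ∏ j ∈ Finset.Ico l (l + c), bJ j :=
      Finset.prod_nonneg fun j hj => by
        have h := Finset.mem_Ico.mp hj; exact hbJ j h.1 (by omega)
    have hvm : x ᵥ* descProd J l (c + 1) = (x ᵥ* J (l + c)) ᵥ* descProd J l c := by
      rw [descProd, vecMul_vecMul]
    have hIco : l + (c + 1) = (l + c) + 1 := by omega
    rw [hvm, hIco, Finset.prod_Ico_succ_top hle, Finset.prod_Ico_succ_top hle]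
    constructor
    · calc (∏ j ∈ Finset.Ico l (l + c), aJ j) * aJ (l + c) * euclNorm x
          = (∏ j ∈ Finset.Ico l (l + c), aJ j) * (aJ (l + c) * euclNorm x) := by ring
        _ ≤ (∏ j ∈ Finset.Ico l (l + c), aJ j) * euclNorm (x ᵥ* J (l + c)) :=
          mul_le_mul_of_nonneg_left hstep.1 hprodA
        _ ≤ _ := ihy.1
    · calc euclNorm ((x ᵥ* J (l + c)) ᵥ* descProd J l c)
          ≤ (∏ j ∈ Finset.Ico l (l + c), bJ j) * euclNorm (x ᵥ* J (l + c)) := ihy.2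
        _ ≤ (∏ j ∈ Finset.Ico l (l + c), bJ j) * (bJ (l + c) * euclNorm x) :=
          mul_le_mul_of_nonneg_left hstep.2 hprodB
        _ = (∏ j ∈ Finset.Ico l (l + c), bJ j) * bJ (l + c) * euclNorm x := by ring

/-- Token gradient bound for TR-GRPO: with layers indexed `l = 0, …, L-1`, blocks
`g_l = γ · w · (e_k − p) · W · (J_{L-1} ⋯ J_l) · G_l` and `‖g‖₂ = √(∑ l ‖g_l‖₂²)`,
`(w (1-π) |γ| / √L) ∑_l a^W a^G_l ∏_{j=l}^{L-1} a^J_j ≤ ‖g‖₂ ≤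
 √2 w (1-π) |γ| ∑_l b^W b^G_l ∏_{j=l}^{L-1} b^J_j`. -/
theorem token_gradient_bound_TRGRPO (L : ℕ) (hL : 1 ≤ L) (N n : ℕ) (hN : 0 < N) (hn : 0 < n)
    (m : ℕ → ℕ) (hm : ∀ l < L, 0 < m l)
    (p : Fin N → ℝ) (hp : ∀ j, 0 ≤ p j) (hsum : ∑ j, p j = 1) (k : Fin N)
    (w : ℝ) (hw : 0 < w) (γ : ℝ)
    (W : Matrix (Fin N) (Fin n) ℝ) (aW bW : ℝ) (haW : 0 ≤ aW)
    (hW : ∀ i, aW ≤ singularValues W i ∧ singularValues W i ≤ bW)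
    (J : ℕ → Matrix (Fin n) (Fin n) ℝ) (aJ bJ : ℕ → ℝ) (haJ : ∀ j < L, 0 ≤ aJ j)
    (hJ : ∀ j < L, ∀ i, aJ j ≤ singularValues (J j) i ∧ singularValues (J j) i ≤ bJ j)
    (G : ∀ l, Matrix (Fin n) (Fin (m l)) ℝ) (aG bG : ℕ → ℝ) (haG : ∀ l < L, 0 ≤ aG l)
    (hG : ∀ l < L, ∀ i, aG l ≤ singularValues (G l) i ∧ singularValues (G l) i ≤ bG l) :
    (w * (1 - p k) * |γ| / Real.sqrt L) *
        ∑ l ∈ Finset.range L, (aW * aG l * ∏ j ∈ Finset.Ico l L, aJ j)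
      ≤ Real.sqrt (∑ l ∈ Finset.range L,
          euclNorm ((γ * w) •
            ((((Pi.single k 1 : Fin N → ℝ) - p) ᵥ* W ᵥ* descProd J l (L - l)) ᵥ* G l)) ^ 2) ∧
    Real.sqrt (∑ l ∈ Finset.range L,
          euclNorm ((γ * w) •
            ((((Pi.single k 1 : Fin N → ℝ) - p) ᵥ* W ᵥ* descProd J l (L - l)) ᵥ* G l)) ^ 2)
      ≤ Real.sqrt 2 * (w * (1 - p k) * |γ|) *
          ∑ l ∈ Finset.range L, (bW * bG l * ∏ j ∈ Finset.Ico l L, bJ j) := by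
  set v : Fin N → ℝ := (Pi.single k 1 : Fin N → ℝ) - p with hv
  set t : ℝ := 1 - p k with htdef
  obtain ⟨hv1, hv2⟩ := onehot_sub_bounds p hp hsum k
  have htnn : 0 ≤ t := by
    have h := Finset.single_le_sum (f := p) (fun j _ => hp j) (Finset.mem_univ k)
    rw [hsum] at h
    simp only [htdef]; linarith
  have hbW : 0 ≤ bW := le_trans haW (le_trans (hW ⟨0, hN⟩).1 (hW ⟨0, hN⟩).2)
  have hbJ0 : ∀ j < L, 0 ≤ bJ j := fun j hj =>
    le_trans (haJ j hj) (le_trans (hJ j hj ⟨0, hn⟩).1 (hJ j hj ⟨0, hn⟩).2)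
  have hbG0 : ∀ l < L, 0 ≤ bG l := fun l hl =>
    le_trans (haG l hl) (le_trans (hG l hl ⟨0, hn⟩).1 (hG l hl ⟨0, hn⟩).2)
  set K : ℝ := |γ * w| with hK
  have hKnn : 0 ≤ K := abs_nonneg _
  have hKeq : K = w * |γ| := by rw [hK, abs_mul, abs_of_pos hw]; ring
  have main : ∀ l < L,
      K * (t * (aW * aG l * ∏ j ∈ Finset.Ico l L, aJ j))
        ≤ euclNorm ((γ * w) • ((v ᵥ* W ᵥ* descProd J l (L - l)) ᵥ* G l)) ∧
      euclNorm ((γ * w) • ((v ᵥ* W ᵥ* descProd J l (L - l)) ᵥ* G l))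
        ≤ K * ((bW * bG l * ∏ j ∈ Finset.Ico l L, bJ j) * (Real.sqrt 2 * t)) := by
    intro l hl
    have hc : l + (L - l) = L := by omega
    have h1 := vecMul_norm_bounds W haW hbW hW v
    have h2 := descProd_norm_bounds J aJ bJ l (L - l)
      (fun j _ hj2 => haJ j (by omega)) (fun j _ hj2 => hbJ0 j (by omega))
      (fun j _ hj2 => hJ j (by omega)) (v ᵥ* W)
    rw [hc] at h2
    have h3 := vecMul_norm_bounds (G l) (haG l hl) (hbG0 l hl) (hG l hl)
      (v ᵥ* W ᵥ* descProd J l (L - l))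
    have hPa : 0 ≤ ∏ j ∈ Finset.Ico l L, aJ j :=
      Finset.prod_nonneg fun j hj => haJ j (Finset.mem_Ico.mp hj).2
    have hPb : 0 ≤ ∏ j ∈ Finset.Ico l L, bJ j :=
      Finset.prod_nonneg fun j hj => hbJ0 j (Finset.mem_Ico.mp hj).2
    rw [euclNorm_smul, ← hK]
    constructor
    · apply mul_le_mul_of_nonneg_left _ hKnn
      calc t * (aW * aG l * ∏ j ∈ Finset.Ico l L, aJ j)
          = aG l * ((∏ j ∈ Finset.Ico l L, aJ j) * (aW * t)) := by ring
        _ ≤ aG l * ((∏ j ∈ Finset.Ico l L, aJ j) * (aW * euclNorm v)) := by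
            have hin : aW * t ≤ aW * euclNorm v := mul_le_mul_of_nonneg_left hv1 haW
            exact mul_le_mul_of_nonneg_left (mul_le_mul_of_nonneg_left hin hPa) (haG l hl)
        _ ≤ aG l * ((∏ j ∈ Finset.Ico l L, aJ j) * euclNorm (v ᵥ* W)) :=
            mul_le_mul_of_nonneg_left (mul_le_mul_of_nonneg_left h1.1 hPa) (haG l hl)
        _ ≤ aG l * euclNorm (v ᵥ* W ᵥ* descProd J l (L - l)) :=
            mul_le_mul_of_nonneg_left h2.1 (haG l hl)
        _ ≤ _ := h3.1
    · apply mul_le_mul_of_nonneg_left _ hKnn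
      calc euclNorm ((v ᵥ* W ᵥ* descProd J l (L - l)) ᵥ* G l)
          ≤ bG l * euclNorm (v ᵥ* W ᵥ* descProd J l (L - l)) := h3.2
        _ ≤ bG l * ((∏ j ∈ Finset.Ico l L, bJ j) * euclNorm (v ᵥ* W)) :=
            mul_le_mul_of_nonneg_left h2.2 (hbG0 l hl)
        _ ≤ bG l * ((∏ j ∈ Finset.Ico l L, bJ j) * (bW * euclNorm v)) :=
            mul_le_mul_of_nonneg_left (mul_le_mul_of_nonneg_left h1.2 hPb) (hbG0 l hl)
        _ ≤ bG l * ((∏ j ∈ Finset.Ico l L, bJ j) * (bW * (Real.sqrt 2 * t))) := by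
            have hin : bW * euclNorm v ≤ bW * (Real.sqrt 2 * t) :=
              mul_le_mul_of_nonneg_left hv2 hbW
            exact mul_le_mul_of_nonneg_left (mul_le_mul_of_nonneg_left hin hPb) (hbG0 l hl)
        _ = (bW * bG l * ∏ j ∈ Finset.Ico l L, bJ j) * (Real.sqrt 2 * t) := by ring
  set S : ℕ → ℝ := fun l => euclNorm ((γ * w) • ((v ᵥ* W ᵥ* descProd J l (L - l)) ᵥ* G l))
    with hSdef
  have hSnn : ∀ l, 0 ≤ S l := fun l => euclNorm_nonneg _
  have hTnn : 0 ≤ Real.sqrt (∑ l ∈ Finset.range L, S l ^ 2) := Real.sqrt_nonneg _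
  constructor
  · -- lower bound
    have hαnn : ∀ l < L, 0 ≤ K * (t * (aW * aG l * ∏ j ∈ Finset.Ico l L, aJ j)) := fun l hl =>
      mul_nonneg hKnn (mul_nonneg htnn (mul_nonneg (mul_nonneg haW (haG l hl))
        (Finset.prod_nonneg fun j hj => haJ j (Finset.mem_Ico.mp hj).2)))
    have hsq : (∑ l ∈ Finset.range L, K * (t * (aW * aG l * ∏ j ∈ Finset.Ico l L, aJ j))) ^ 2
        ≤ (L : ℝ) * ∑ l ∈ Finset.range L, S l ^ 2 := by
      calc (∑ l ∈ Finset.range L, K * (t * (aW * aG l * ∏ j ∈ Finset.Ico l L, aJ j))) ^ 2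
          ≤ (#(Finset.range L) : ℝ) *
              ∑ l ∈ Finset.range L, (K * (t * (aW * aG l * ∏ j ∈ Finset.Ico l L, aJ j))) ^ 2 :=
            sq_sum_le_card_mul_sum_sq
        _ ≤ (L : ℝ) * ∑ l ∈ Finset.range L, S l ^ 2 := by
            rw [Finset.card_range]
            refine mul_le_mul_of_nonneg_left ?_ (Nat.cast_nonneg L)
            refine Finset.sum_le_sum fun l hl => ?_
            exact pow_le_pow_left₀ (hαnn l (Finset.mem_range.mp hl))
              (main l (Finset.mem_range.mp hl)).1 2
    have hsum_le : ∑ l ∈ Finset.range L, K * (t * (aW * aG l * ∏ j ∈ Finset.Ico l L, aJ j))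
        ≤ Real.sqrt L * Real.sqrt (∑ l ∈ Finset.range L, S l ^ 2) := by
      have h := Real.sqrt_le_sqrt hsq
      rwa [Real.sqrt_sq (Finset.sum_nonneg fun l hl => hαnn l (Finset.mem_range.mp hl)),
        Real.sqrt_mul (Nat.cast_nonneg L)] at h
    have hLpos : (0:ℝ) < Real.sqrt L :=
      Real.sqrt_pos.mpr (by exact_mod_cast Nat.lt_of_lt_of_le Nat.zero_lt_one hL)
    rw [div_mul_eq_mul_div, div_le_iff₀ hLpos]
    have hsum_eq : ∑ l ∈ Finset.range L, K * (t * (aW * aG l * ∏ j ∈ Finset.Ico l L, aJ j))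
        = w * t * |γ| * ∑ l ∈ Finset.range L, (aW * aG l * ∏ j ∈ Finset.Ico l L, aJ j) := by
      rw [Finset.mul_sum]
      exact Finset.sum_congr rfl fun l _ => by rw [hKeq]; ring
    calc w * t * |γ| * ∑ l ∈ Finset.range L, (aW * aG l * ∏ j ∈ Finset.Ico l L, aJ j)
        = ∑ l ∈ Finset.range L, K * (t * (aW * aG l * ∏ j ∈ Finset.Ico l L, aJ j)) :=
          hsum_eq.symm
      _ ≤ Real.sqrt L * Real.sqrt (∑ l ∈ Finset.range L, S l ^ 2) := hsum_le
      _ = Real.sqrt (∑ l ∈ Finset.range L, S l ^ 2) * Real.sqrt L := mul_comm _ _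
  · -- upper bound
    have hβnn : ∀ l < L,
        0 ≤ K * ((bW * bG l * ∏ j ∈ Finset.Ico l L, bJ j) * (Real.sqrt 2 * t)) := fun l hl =>
      mul_nonneg hKnn (mul_nonneg (mul_nonneg (mul_nonneg hbW (hbG0 l hl))
        (Finset.prod_nonneg fun j hj => hbJ0 j (Finset.mem_Ico.mp hj).2))
        (mul_nonneg (Real.sqrt_nonneg 2) htnn))
    calc Real.sqrt (∑ l ∈ Finset.range L, S l ^ 2)
        ≤ Real.sqrt (∑ l ∈ Finset.range L,
            (K * ((bW * bG l * ∏ j ∈ Finset.Ico l L, bJ j) * (Real.sqrt 2 * t))) ^ 2) := by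
          apply Real.sqrt_le_sqrt
          refine Finset.sum_le_sum fun l hl => ?_
          exact pow_le_pow_left₀ (hSnn l) (main l (Finset.mem_range.mp hl)).2 2
      _ ≤ Real.sqrt ((∑ l ∈ Finset.range L,
            K * ((bW * bG l * ∏ j ∈ Finset.Ico l L, bJ j) * (Real.sqrt 2 * t))) ^ 2) := by
          apply Real.sqrt_le_sqrt
          exact Finset.sum_sq_le_sq_sum_of_nonneg fun l hl => hβnn l (Finset.mem_range.mp hl)
      _ = ∑ l ∈ Finset.range L,
            K * ((bW * bG l * ∏ j ∈ Finset.Ico l L, bJ j) * (Real.sqrt 2 * t)) :=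
          Real.sqrt_sq (Finset.sum_nonneg fun l hl => hβnn l (Finset.mem_range.mp hl))
      _ = Real.sqrt 2 * (w * t * |γ|) *
            ∑ l ∈ Finset.range L, (bW * bG l * ∏ j ∈ Finset.Ico l L, bJ j) := by
          rw [Finset.mul_sum]
          exact Finset.sum_congr rfl fun l _ => by rw [hKeq]; ring
end
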